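/- Let Ω be a domain in ℂ^n containing the origin 0, let φ be a plurisubharmonic function on Ω, and let s > t > -n be real numbers. Then for every real a > 0 one has c_s(max{φ, a·log‖z‖}) ≥ c_t(φ) + (s-t)/a. -/

import Mathlib

open MeasureTheory Filter Metric Topology Complex
open scoped ENNReal EReal

noncomputable section

/-- `ℂ^n` with its Euclidean (Hermitian) norm. -/
abbrev Cn (n : ℕ) : Type := EuclideanSpace ℂ (Fin n)

/-- Lebesgue measure on `ℂ^n ≅ ℝ^{2n}`. -/
instance Cn.measureSpace (n : ℕ) : MeasureSpace (Cn n) where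
  toMeasurableSpace := MeasurableSpace.comap (WithLp.ofLp (p := 2)) inferInstance
  volume := Measure.map (WithLp.toLp 2) (volume : Measure (Fin n → ℂ))

/-- Extended-real-valued logarithm, sending `0` (and negative numbers) to `-∞`. -/
def elog (x : ℝ) : EReal := if x ≤ 0 then (⊥ : EReal) else ((Real.log x : ℝ) : EReal)

/-- `exp : EReal → ℝ≥0∞`, with `exp (-∞) = 0` and `exp (+∞) = +∞`. -/
def erealExp (x : EReal) : ℝ≥0∞ :=
  if x = ⊤ then ⊤ else if x = ⊥ then 0 else ENNReal.ofReal (Real.exp x.toReal)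

/-- The positive part of an extended real number, as an element of `ℝ≥0∞`. -/
def erealPosPart (x : EReal) : ℝ≥0∞ := if x = ⊤ then ⊤ else ENNReal.ofReal x.toReal

/-- The integral of an `EReal`-valued function: upper integral of the positive part minus the
upper integral of the negative part. -/
def erealIntegral {α : Type*} [MeasurableSpace α] (μ : Measure α) (f : α → EReal) : EReal :=
  ((∫⁻ a, erealPosPart (f a) ∂μ : ℝ≥0∞) : EReal) -
    ((∫⁻ a, erealPosPart (-(f a)) ∂μ : ℝ≥0∞) : EReal)

/-- A function `f : ℂ → [-∞, ∞)` is subharmonic on an open set `U ⊆ ℂ` if it is upper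
semicontinuous on `U` and satisfies the sub-mean value inequality on circles contained in `U`
(written in the form `2π · f(z) ≤ ∫_0^{2π} f(z + r e^{iθ}) dθ`). -/
def SubhOn (f : ℂ → EReal) (U : Set ℂ) : Prop :=
  UpperSemicontinuousOn f U ∧
  ∀ z ∈ U, ∀ r : ℝ, 0 < r → closedBall z r ⊆ U →
    ((2 * Real.pi : ℝ) : EReal) * f z ≤
      erealIntegral (volume.restrict (Set.Ioc (0:ℝ) (2 * Real.pi)))
        (fun θ : ℝ => f (z + (r : ℂ) * Complex.exp (θ * Complex.I)))

/-- A function `φ : ℂ^n → [-∞, ∞)` is plurisubharmonic on `Ω` if it is upper semicontinuous on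
`Ω`, not identically `-∞`, never `+∞`, and its restriction to every complex line is subharmonic. -/
def PshOn {n : ℕ} (φ : Cn n → EReal) (Ω : Set (Cn n)) : Prop :=
  UpperSemicontinuousOn φ Ω ∧ (∃ z ∈ Ω, φ z ≠ ⊥) ∧ (∀ z ∈ Ω, φ z ≠ ⊤) ∧
  ∀ a v : Cn n, SubhOn (fun w : ℂ => φ (a + w • v)) {w : ℂ | a + w • v ∈ Ω}

/-- A domain in `ℂ^n`: a nonempty connected open set. -/
def IsCnDomain {n : ℕ} (Ω : Set (Cn n)) : Prop := IsOpen Ω ∧ IsConnected Ω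

/-- The Lelong number of `φ` at the origin: `ν_φ(0) = liminf_{z → 0} φ(z) / log ‖z‖`. -/
def lelong {n : ℕ} (φ : Cn n → EReal) : EReal :=
  liminf (fun z : Cn n => φ z * (((Real.log ‖z‖)⁻¹ : ℝ) : EReal)) (𝓝[≠] (0 : Cn n))

/-- The Lelong number at `0` of the restriction of `φ` to the complex line through `0` with
direction `v`: `ν_{φ|_l}(0) = liminf_{λ → 0} φ(λ v) / log |λ|`. -/
def lelongLine {n : ℕ} (φ : Cn n → EReal) (v : Cn n) : EReal :=
  liminf (fun w : ℂ => φ (w • v) * (((Real.log ‖w‖)⁻¹ : ℝ) : EReal)) (𝓝[≠] (0 : ℂ))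

/-- `‖z‖^{2t} e^{-2cφ}` is (Lebesgue) integrable on some neighborhood of the origin. -/
def lctIntegrable {n : ℕ} (t c : ℝ) (φ : Cn n → EReal) : Prop :=
  ∃ U ∈ 𝓝 (0 : Cn n),
    (∫⁻ z in U, ENNReal.ofReal (‖z‖ ^ (2 * t)) *
        erealExp (((-(2 * c) : ℝ) : EReal) * φ z) ∂volume) < ⊤

/-- The weighted log canonical threshold
`c_t(φ) = sup {c ≥ 0 : ‖z‖^{2t} e^{-2cφ}` is integrable near `0}`, as an element of `[0, ∞]`. -/
def lct {n : ℕ} (t : ℝ) (φ : Cn n → EReal) : ℝ≥0∞ :=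
  ⨆ c ∈ {c : ℝ | 0 ≤ c ∧ lctIntegrable t c φ}, ENNReal.ofReal c


section AuxLemmas
open Set

instance Cn.borelSpace (n : ℕ) : BorelSpace (Cn n) := PiLp.borelSpace 2
instance Cn.isAddHaar (n : ℕ) : (volume : Measure (Cn n)).IsAddHaarMeasure :=
  (PiLp.continuousLinearEquiv 2 ℂ (fun _ : Fin n => ℂ)).symm.isAddHaarMeasure_map volume

lemma Cn.finrank_eq (n : ℕ) : (Module.finrank ℝ (Cn n) : ℝ) = 2 * n := by
  have h : Module.finrank ℝ (Cn n) = Module.finrank ℝ ℂ * Module.finrank ℂ (Cn n) :=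
    (Module.finrank_mul_finrank ℝ ℂ (Cn n)).symm
  rw [h, finrank_euclideanSpace, Complex.finrank_real_complex, Fintype.card_fin]
  push_cast; ring

lemma finite_rpow_ball {n : ℕ} {p : ℝ} (hp : -(2 * (n : ℝ)) < p) :
    ∫⁻ z in ball (0 : Cn n) 1, ENNReal.ofReal (‖z‖ ^ p) < ⊤ := by
  rcases le_or_gt 0 p with hp0 | hp0
  · calc ∫⁻ z in ball (0 : Cn n) 1, ENNReal.ofReal (‖z‖ ^ p)
        ≤ ∫⁻ _ in ball (0 : Cn n) 1, 1 := by
          refine setLIntegral_mono' measurableSet_ball fun z hz => ?_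
          simp only [ENNReal.ofReal_le_one]
          exact Real.rpow_le_one (norm_nonneg _) (le_of_lt (mem_ball_zero_iff.1 hz)) hp0
      _ = volume (ball (0 : Cn n) 1) := by simp
      _ < ⊤ := measure_ball_lt_top
  · have hpne : p ≠ 0 := hp0.ne
    have hinv : 1 / p < 0 := one_div_neg.2 hp0
    rw [lintegral_eq_lintegral_meas_le _
      (Filter.Eventually.of_forall fun z => Real.rpow_nonneg (norm_nonneg _) _)
      ((by fun_prop : Measurable fun z : Cn n => ‖z‖ ^ p).aemeasurable)]
    have hsub : ∀ u : ℝ, 0 < u →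
        {z : Cn n | u ≤ ‖z‖ ^ p} ⊆ closedBall (0 : Cn n) (u ^ (1 / p)) := by
      intro u hu z hz
      simp only [mem_setOf_eq] at hz
      have hzne : z ≠ 0 := by
        rintro rfl
        rw [norm_zero, Real.zero_rpow hpne] at hz
        linarith
      have hznorm : (0:ℝ) < ‖z‖ := norm_pos_iff.2 hzne
      have h1 : (‖z‖ ^ p) ^ (1 / p) ≤ u ^ (1 / p) :=
        Real.rpow_le_rpow_of_nonpos hu hz hinv.le
      rw [← Real.rpow_mul hznorm.le, mul_one_div_cancel hpne, Real.rpow_one] at h1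
      exact mem_closedBall_zero_iff.2 h1
    set d : ℕ := Module.finrank ℝ (Cn n) with hd
    have hdlt : (d : ℝ) / p < -1 := by
      rw [div_lt_iff_of_neg hp0]
      rw [hd, Cn.finrank_eq]
      linarith
    calc ∫⁻ u in Ioi (0:ℝ), (volume.restrict (ball (0:Cn n) 1)) {z | u ≤ ‖z‖ ^ p}
        ≤ ∫⁻ u in Ioc (0:ℝ) 1 ∪ Ioi 1, (volume.restrict (ball (0:Cn n) 1)) {z | u ≤ ‖z‖ ^ p} :=
          lintegral_mono_set Ioi_subset_Ioc_union_Ioi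
      _ ≤ (∫⁻ u in Ioc (0:ℝ) 1, (volume.restrict (ball (0:Cn n) 1)) {z | u ≤ ‖z‖ ^ p})
          + ∫⁻ u in Ioi (1:ℝ), (volume.restrict (ball (0:Cn n) 1)) {z | u ≤ ‖z‖ ^ p} :=
          lintegral_union_le _ _ _
      _ < ⊤ := by
          refine ENNReal.add_lt_top.2 ⟨?_, ?_⟩
          · calc ∫⁻ u in Ioc (0:ℝ) 1, (volume.restrict (ball (0:Cn n) 1)) {z | u ≤ ‖z‖ ^ p}
                ≤ ∫⁻ _ in Ioc (0:ℝ) 1, volume (ball (0:Cn n) 1) :=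
                  setLIntegral_mono' measurableSet_Ioc (fun u _ => by
                    refine le_trans (measure_mono (subset_univ _)) ?_
                    rw [Measure.restrict_apply_univ])
              _ = volume (ball (0:Cn n) 1) * volume (Ioc (0:ℝ) 1) := by
                  rw [setLIntegral_const]
              _ < ⊤ := by
                  refine ENNReal.mul_lt_top measure_ball_lt_top ?_
                  simp [Real.volume_Ioc]
          · have hb : ∀ u ∈ Ioi (1:ℝ), (volume.restrict (ball (0:Cn n) 1)) {z | u ≤ ‖z‖ ^ p}
                ≤ ENNReal.ofReal (u ^ ((d:ℝ)/p)) * volume (ball (0:Cn n) 1) := by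
              intro u hu
              have hu0 : (0:ℝ) < u := lt_trans one_pos hu
              calc (volume.restrict (ball (0:Cn n) 1)) {z | u ≤ ‖z‖ ^ p}
                  ≤ volume {z : Cn n | u ≤ ‖z‖ ^ p} := Measure.restrict_le_self _
                _ ≤ volume (closedBall (0:Cn n) (u ^ (1/p))) := measure_mono (hsub u hu0)
                _ = ENNReal.ofReal ((u ^ (1/p)) ^ d) * volume (ball (0:Cn n) 1) :=
                    Measure.addHaar_closedBall _ _ (Real.rpow_nonneg hu0.le _)
                _ = ENNReal.ofReal (u ^ ((d:ℝ)/p)) * volume (ball (0:Cn n) 1) := by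
                    rw [← Real.rpow_natCast (u ^ (1/p)) d, ← Real.rpow_mul hu0.le]
                    ring_nf
            calc ∫⁻ u in Ioi (1:ℝ), (volume.restrict (ball (0:Cn n) 1)) {z | u ≤ ‖z‖ ^ p}
                ≤ ∫⁻ u in Ioi (1:ℝ), ENNReal.ofReal (u ^ ((d:ℝ)/p)) * volume (ball (0:Cn n) 1) :=
                  setLIntegral_mono' measurableSet_Ioi hb
              _ = (∫⁻ u in Ioi (1:ℝ), ENNReal.ofReal (u ^ ((d:ℝ)/p))) * volume (ball (0:Cn n) 1) :=
                  lintegral_mul_const' _ _ measure_ball_lt_top.ne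
              _ < ⊤ := ENNReal.mul_lt_top
                  ((integrableOn_Ioi_rpow_of_lt hdlt one_pos).setLIntegral_lt_top)
                  measure_ball_lt_top


lemma erealExp_coe (x : ℝ) : erealExp (x : EReal) = ENNReal.ofReal (Real.exp x) := by
  simp [erealExp, EReal.coe_ne_top, EReal.coe_ne_bot]

lemma erealExp_top : erealExp ⊤ = ⊤ := by simp [erealExp]
lemma erealExp_bot : erealExp ⊥ = 0 := by simp [erealExp]

lemma key_pointwise {n : ℕ} (φ : Cn n → EReal) (c dd a s t : ℝ) (hc : 0 ≤ c) (hd : 0 < dd)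
    (ha : 0 < a) (hat : dd * a = s - t) (z : Cn n) (hz : z ≠ 0) :
    ENNReal.ofReal (‖z‖ ^ (2 * s)) *
        erealExp (((-(2 * (c + dd)) : ℝ) : EReal) * max (φ z) ((a : EReal) * elog ‖z‖))
      ≤ ENNReal.ofReal (‖z‖ ^ (2 * t)) * erealExp (((-(2 * c) : ℝ) : EReal) * φ z) := by
  have hr : (0:ℝ) < ‖z‖ := norm_pos_iff.2 hz
  set L : ℝ := Real.log ‖z‖ with hL
  have helog : elog ‖z‖ = (L : EReal) := by rw [elog, if_neg (not_le.2 hr)]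
  have hcoe : (a : EReal) * elog ‖z‖ = ((a * L : ℝ) : EReal) := by
    rw [helog, ← EReal.coe_mul]
  by_cases hφt : φ z = ⊤
  · have hM : max (φ z) ((a : EReal) * elog ‖z‖) = ⊤ := by simp [hφt]
    rw [hM, EReal.mul_top_of_neg (by exact_mod_cast (by linarith : -(2*(c+dd)) < (0:ℝ))),
      erealExp_bot, mul_zero]
    exact zero_le
  · set M : EReal := max (φ z) ((a : EReal) * elog ‖z‖) with hMdef
    have hMt : M ≠ ⊤ := by
      rw [hMdef, hcoe]
      intro h
      rcases max_eq_iff.1 h with ⟨h1, _⟩ | ⟨h1, _⟩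
      · exact hφt h1
      · exact EReal.coe_ne_top _ h1
    have hMb : M ≠ ⊥ := by
      intro h
      have : ((a * L : ℝ) : EReal) ≤ ⊥ := h ▸ (hcoe ▸ le_max_right (φ z) _)
      exact EReal.coe_ne_bot _ (le_bot_iff.1 this)
    obtain ⟨m, hm⟩ : ∃ m : ℝ, M = (m : EReal) := ⟨M.toReal, (EReal.coe_toReal hMt hMb).symm⟩
    have hmL : a * L ≤ m := by
      have h1 : ((a * L : ℝ) : EReal) ≤ M := by rw [hMdef, hcoe]; exact le_max_right _ _
      rw [hm] at h1; exact_mod_cast h1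
    have hφM : φ z ≤ (m : EReal) := by rw [← hm, hMdef]; exact le_max_left _ _
    rw [hm, ← EReal.coe_mul, erealExp_coe]
    -- Step 1 : real inequality
    have step1 : ‖z‖ ^ (2*s) * Real.exp (-(2*(c+dd)) * m)
        ≤ ‖z‖ ^ (2*t) * Real.exp (-(2*c) * m) := by
      have e1 : Real.exp (-(2*(c+dd)) * m) = Real.exp (-(2*c)*m) * Real.exp (-(2*dd)*m) := by
        rw [← Real.exp_add]; ring_nf
      have e2 : Real.exp (-(2*dd)*m) ≤ Real.exp (-(2*dd)*(a*L)) :=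
        Real.exp_le_exp.2 (by nlinarith)
      have e3 : Real.exp (-(2*dd)*(a*L)) = ‖z‖ ^ (-(2*(s-t))) := by
        rw [Real.rpow_def_of_pos hr]
        congr 1
        rw [← hat]; ring
      have e4 : ‖z‖ ^ (2*s) * ‖z‖ ^ (-(2*(s-t))) = ‖z‖ ^ (2*t) := by
        rw [← Real.rpow_add hr]; ring_nf
      calc ‖z‖ ^ (2*s) * Real.exp (-(2*(c+dd)) * m)
          = ‖z‖ ^ (2*s) * Real.exp (-(2*c)*m) * Real.exp (-(2*dd)*m) := by rw [e1]; ring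
        _ ≤ ‖z‖ ^ (2*s) * Real.exp (-(2*c)*m) * (‖z‖ ^ (-(2*(s-t)))) := by
            refine mul_le_mul_of_nonneg_left (e2.trans_eq e3) (by positivity)
        _ = ‖z‖ ^ (2*t) * Real.exp (-(2*c)*m) := by rw [← e4]; ring
    -- Step 2 : compare exp(-2c m) with erealExp (-2c * φ z)
    have step2 : ENNReal.ofReal (Real.exp (-(2*c) * m))
        ≤ erealExp (((-(2*c) : ℝ) : EReal) * φ z) := by
      by_cases hφb : φ z = ⊥
      · rcases eq_or_lt_of_le hc with hc0 | hc0
        · have hz0 : ((-(2 * (0:ℝ)) : ℝ) : EReal) = (0 : EReal) := by norm_num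
          have he0 : erealExp (0 : EReal) = 1 := by
            rw [show (0 : EReal) = ((0 : ℝ) : EReal) by simp, erealExp_coe]; simp
          rw [hφb, ← hc0, hz0, zero_mul, he0]
          refine ENNReal.ofReal_le_one.2 ?_
          rw [show -(2 * (0:ℝ)) * m = 0 by ring, Real.exp_zero]
        · rw [hφb, EReal.mul_bot_of_neg (by exact_mod_cast (by linarith : -(2*c) < (0:ℝ))),
            erealExp_top]
          exact le_top
      · obtain ⟨x, hx⟩ : ∃ x : ℝ, φ z = (x : EReal) :=
          ⟨(φ z).toReal, (EReal.coe_toReal hφt hφb).symm⟩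
        have hxm : x ≤ m := by rw [hx] at hφM; exact_mod_cast hφM
        rw [hx, ← EReal.coe_mul, erealExp_coe]
        exact ENNReal.ofReal_le_ofReal (Real.exp_le_exp.2
          (mul_le_mul_of_nonpos_left hxm (by linarith)))
    calc ENNReal.ofReal (‖z‖ ^ (2*s)) * ENNReal.ofReal (Real.exp (-(2*(c+dd)) * m))
        = ENNReal.ofReal (‖z‖ ^ (2*s) * Real.exp (-(2*(c+dd)) * m)) :=
          (ENNReal.ofReal_mul (by positivity)).symm
      _ ≤ ENNReal.ofReal (‖z‖ ^ (2*t) * Real.exp (-(2*c) * m)) :=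
          ENNReal.ofReal_le_ofReal step1
      _ = ENNReal.ofReal (‖z‖ ^ (2*t)) * ENNReal.ofReal (Real.exp (-(2*c) * m)) :=
          ENNReal.ofReal_mul (by positivity)
      _ ≤ ENNReal.ofReal (‖z‖ ^ (2*t)) * erealExp (((-(2*c) : ℝ) : EReal) * φ z) :=
          mul_le_mul_right step2 _


end AuxLemmas

/-- For `s > t > -n` and any `a > 0`:
`c_s(max{φ, a log‖z‖}) ≥ c_t(φ) + (s-t)/a` (in `[0,∞]`). -/
theorem statement9 {n : ℕ} (hn : 0 < n) (Ω : Set (Cn n)) (hΩ : IsCnDomain Ω)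
    (h0 : (0 : Cn n) ∈ Ω) (φ : Cn n → EReal) (hφ : PshOn φ Ω)
    (s t : ℝ) (hst : t < s) (ht : -(n : ℝ) < t) (a : ℝ) (ha : 0 < a) :
    lct t φ + ENNReal.ofReal ((s - t) / a)
      ≤ lct s (fun z : Cn n => max (φ z) ((a : EReal) * elog ‖z‖)) := by
  classical
  set ψ : Cn n → EReal := fun z : Cn n => max (φ z) ((a : EReal) * elog ‖z‖) with hψ
  set d0 : ℝ := (s - t) / a with hd0def
  have hd0 : 0 < d0 := div_pos (by linarith) ha
  have hda : d0 * a = s - t := div_mul_cancel₀ _ ha.ne'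
  have hbase : ∫⁻ z in ball (0 : Cn n) 1, ENNReal.ofReal (‖z‖ ^ (2 * t)) < ⊤ := by
    refine finite_rpow_ball ?_
    linarith
  have hae : ∀ᵐ z ∂(volume : Measure (Cn n)), z ≠ (0 : Cn n) := by
    haveI : Nonempty (Fin n) := ⟨⟨0, hn⟩⟩
    haveI : NullSingletonClass (volume : Measure (Cn n)) :=
      inferInstance
    rw [ae_iff]
    have hset : {z : Cn n | ¬ z ≠ 0} = {(0 : Cn n)} := by ext z; simp
    rw [hset]
    exact measure_singleton _
  -- membership transfer
  have hmem : ∀ c : ℝ, 0 ≤ c → lctIntegrable t c φ → lctIntegrable s (c + d0) ψ := by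
    rintro c hc ⟨U, hU, hI⟩
    refine ⟨U, hU, lt_of_le_of_lt ?_ hI⟩
    refine lintegral_mono_ae ?_
    filter_upwards [ae_restrict_of_ae hae] with z hz
    exact key_pointwise φ c d0 a s t hc hd0 ha hda z hz
  -- c = 0 is admissible for t
  have h0mem : (0 : ℝ) ∈ {c : ℝ | 0 ≤ c ∧ lctIntegrable t c φ} := by
    refine ⟨le_refl 0, ball (0 : Cn n) 1, ball_mem_nhds _ one_pos, ?_⟩
    have hpt : ∀ z : Cn n,
        ENNReal.ofReal (‖z‖ ^ (2 * t)) * erealExp (((-(2 * (0:ℝ)) : ℝ) : EReal) * φ z)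
          = ENNReal.ofReal (‖z‖ ^ (2 * t)) := by
      intro z
      have hz0 : ((-(2 * (0:ℝ)) : ℝ) : EReal) = (0 : EReal) := by norm_num
      have he0 : erealExp (0 : EReal) = 1 := by
        rw [show (0 : EReal) = ((0 : ℝ) : EReal) by simp, erealExp_coe]; simp
      rw [hz0, zero_mul, he0, mul_one]
    simp only [hpt]
    exact hbase
  -- final sup manipulation
  rw [lct, ENNReal.biSup_add ⟨0, h0mem⟩]
  refine iSup₂_le fun c hc => ?_
  rw [← ENNReal.ofReal_add hc.1 hd0.le]
  have hmem' : (c + d0) ∈ {c : ℝ | 0 ≤ c ∧ lctIntegrable s c ψ} :=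
    ⟨by linarith [hc.1], hmem c hc.1 hc.2⟩
  exact le_biSup (fun c : ℝ => ENNReal.ofReal c) hmem'

end
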